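/- Let C be a cycle with an even number of edges and let M be a complete planar (non-crossing) matching of the edges of C. Then the multigraph G obtained from C by identifying matched edge pairs (preserving the orientation of C) is a tree. -/

import Mathlib

namespace MogamiPaper

/-- the matching `m` on the edges of the cycle (edge `i` joins `i` and `i+1`)
is planar: no two matched pairs cross. -/
def NonCrossing {k : ℕ} (m : Fin k → Fin k) : Prop :=
  ∀ i j : Fin k, (i : ℕ) < (m i : ℕ) → (j : ℕ) < (m j : ℕ) →
    ¬ ((i : ℕ) < (j : ℕ) ∧ (j : ℕ) < (m i : ℕ) ∧ (m i : ℕ) < (m j : ℕ))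

/-- identifying edge `i` with edge `m i` preserving the orientation of the
cycle identifies the vertex `i + 1` with the vertex `m i`. -/
def glueRel {k : ℕ} [NeZero k] (m : Fin k → Fin k) : Fin k → Fin k → Prop :=
  fun u v => ∃ i : Fin k, u = i + 1 ∧ v = m i

/-- the vertex identifications generated by the matching -/
def vertexSetoid {k : ℕ} [NeZero k] (m : Fin k → Fin k) : Setoid (Fin k) :=
  ⟨Relation.EqvGen (glueRel m), Relation.EqvGen.is_equivalence _⟩

/-! ### Auxiliary development

We assign to each vertex (gap) `j` of the cycle the innermost chord `(i, m i)`
(with `i < m i`) strictly covering the gap `j`, i.e. with `i < j ≤ m i`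
(or `⊥` if no chord covers it).  We show that two vertices are identified by
the matching iff this "innermost covering chord" invariant agrees, and that the
invariant takes exactly `k/2 + 1` values. -/

variable {k : ℕ}

/-- the set of chords strictly covering the gap `j` -/
def cov (m : Fin k → Fin k) (j : ℕ) : Finset (Fin k) :=
  Finset.univ.filter fun i => (i:ℕ) < (m i:ℕ) ∧ (i:ℕ) < j ∧ j ≤ (m i:ℕ)

lemma mem_cov {m : Fin k → Fin k} {j : ℕ} {i : Fin k} :
    i ∈ cov m j ↔ (i:ℕ) < (m i:ℕ) ∧ (i:ℕ) < j ∧ j ≤ (m i:ℕ) := by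
  simp [cov]

/-- the innermost chord covering the gap `j` (the chords covering a fixed gap
are totally ordered by inclusion, which on their left endpoints is the usual
order; so the innermost one is the one with maximal left endpoint) -/
def hmap [NeZero k] (m : Fin k → Fin k) (j : Fin k) : WithBot (Fin k) :=
  (cov m (j:ℕ)).max

lemma cov_zero (m : Fin k → Fin k) : cov m 0 = ∅ := by
  ext i; simp [mem_cov]

section main
variable [NeZero k] {m : Fin k → Fin k}

lemma one_lt_k (hfix : ∀ i, m i ≠ i) : 1 < k := by
  rcases Nat.lt_or_ge 1 k with h | h
  · exact h
  · interval_cases k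
    · exact absurd rfl (NeZero.ne 0)
    · exact absurd (Subsingleton.elim (m 0) 0) (hfix 0)

variable (hinv : Function.Involutive m) (hfix : ∀ i, m i ≠ i) (hpl : NonCrossing m)

include hinv hfix hpl in
/-- the key geometric fact: the chords covering the gap `i+1` are exactly the
chords covering the gap `m i`, for any edge `i`. -/
lemma cov_glue (i : Fin k) : cov m ((i + 1 : Fin k) : ℕ) = cov m ((m i : ℕ)) := by
  have h1k : 1 < k := one_lt_k hfix
  have hval : ((i + 1 : Fin k) : ℕ) = ((i:ℕ) + 1) % k := by
    rw [Fin.add_def]; simp [Nat.mod_eq_of_lt h1k]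
  have hne : (m i : ℕ) ≠ (i : ℕ) := fun h => hfix i (Fin.val_injective h)
  ext i'
  simp only [mem_cov]
  -- generally useful equivalences
  have e1 : (m i' : ℕ) = (m i : ℕ) ↔ (i' : ℕ) = (i : ℕ) :=
    ⟨fun h => congrArg Fin.val (hinv.injective (Fin.val_injective h)),
     fun h => congrArg (fun t => (m t : ℕ)) (Fin.val_injective h)⟩
  have e2 : (m i' : ℕ) = (i : ℕ) ↔ (i' : ℕ) = (m i : ℕ) := by
    constructor
    · intro h
      have : m i' = m (m i) := by rw [hinv]; exact Fin.val_injective h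
      exact congrArg Fin.val (hinv.injective this)
    · intro h
      have : i' = m i := Fin.val_injective h
      rw [this, hinv]
  rcases Nat.lt_or_ge (i:ℕ) (m i:ℕ) with hA | hB
  · -- case i < m i
    have hv : ((i + 1 : Fin k) : ℕ) = (i:ℕ) + 1 := by
      rw [hval, Nat.mod_eq_of_lt (by omega : (i:ℕ) + 1 < k)]
    have hmlt : (m i : ℕ) < k := (m i).isLt
    rw [hv]
    constructor
    · rintro ⟨h1, h2, h3⟩
      have hp1 := hpl i' i h1 hA
      exact ⟨h1, by omega, by omega⟩
    · rintro ⟨h1, h2, h3⟩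
      have hp2 := hpl i i' hA h1
      exact ⟨h1, by omega, by omega⟩
  · -- case m i < i
    have hBlt : (m i : ℕ) < (i : ℕ) := lt_of_le_of_ne hB hne
    have hAa : ((m i : Fin k) : ℕ) < ((m (m i)) : ℕ) := by rw [hinv]; exact hBlt
    have hik : (i : ℕ) < k := i.isLt
    have hma : ((m (m i)) : ℕ) = (i : ℕ) := by rw [hinv]
    rcases Nat.lt_or_ge ((i:ℕ) + 1) k with hlt | hge
    · -- no wraparound
      have hv : ((i + 1 : Fin k) : ℕ) = (i:ℕ) + 1 := by
        rw [hval, Nat.mod_eq_of_lt hlt]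
      rw [hv]
      constructor
      · rintro ⟨h1, h2, h3⟩
        have hp4 := hpl (m i) i' hAa h1
        rw [hma] at hp4
        exact ⟨h1, by omega, by omega⟩
      · rintro ⟨h1, h2, h3⟩
        have hp3 := hpl i' (m i) h1 hAa
        rw [hma] at hp3
        exact ⟨h1, by omega, by omega⟩
    · -- i = k - 1 : both sides are empty
      have hv : ((i + 1 : Fin k) : ℕ) = 0 := by
        have : (i : ℕ) + 1 = k := by omega
        rw [hval, this, Nat.mod_self]
      rw [hv]
      constructor
      · rintro ⟨h1, h2, h3⟩; omega
      · rintro ⟨h1, h2, h3⟩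
        have hp3 := hpl i' (m i) h1 hAa
        rw [hma] at hp3
        have : (m i' : ℕ) < k := (m i').isLt
        exact absurd rfl (by omega : (0:ℕ) ≠ 0)

include hinv hfix hpl in
lemma hmap_glue (i : Fin k) : hmap m (i + 1) = hmap m (m i) := by
  unfold hmap
  rw [cov_glue hinv hfix hpl i]

include hinv hfix hpl in
lemma hmap_eqvGen {u v : Fin k} (h : Relation.EqvGen (glueRel m) u v) :
    hmap m u = hmap m v := by
  induction h with
  | rel u v huv =>
      obtain ⟨i, rfl, rfl⟩ := huv
      exact hmap_glue hinv hfix hpl i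
  | refl => rfl
  | symm _ _ _ ih => exact ih.symm
  | trans _ _ _ _ _ ih1 ih2 => exact ih1.trans ih2

lemma hmap_zero : hmap m 0 = ⊥ := by
  unfold hmap
  simp [cov_zero]

/-- if `i < m i`, the chord `i` is the maximal chord covering the gap `i+1`. -/
lemma hmap_succ (i : Fin k) (h : (i:ℕ) < (m i:ℕ)) :
    hmap m (i + 1) = (i : WithBot (Fin k)) := by
  have hv : ((i + 1 : Fin k) : ℕ) = (i:ℕ) + 1 := by
    have h1 : (i:ℕ) + 1 < k := lt_of_le_of_lt h (m i).isLt
    rw [Fin.add_def]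
    have h1k : 1 < k := by omega
    simp [Nat.mod_eq_of_lt h1k, Nat.mod_eq_of_lt h1]
  unfold hmap
  rw [hv]
  apply le_antisymm
  · apply Finset.max_le
    intro b hb
    rw [mem_cov] at hb
    exact_mod_cast (by exact_mod_cast Nat.lt_succ_iff.mp hb.2.1 : b ≤ i)
  · exact Finset.le_max (mem_cov.mpr ⟨h, by omega, by omega⟩)

/-- a canonical representative of the class of `j` -/
def rep (m : Fin k → Fin k) [NeZero k] (j : Fin k) : Fin k :=
  (hmap m j).recBotCoe 0 (fun i => i + 1)

include hinv hfix hpl in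
lemma reach : ∀ j : Fin k, Relation.EqvGen (glueRel m) j (rep m j) := by
  suffices H : ∀ n : ℕ, ∀ j : Fin k, (j : ℕ) ≤ n →
      Relation.EqvGen (glueRel m) j (rep m j) by
    intro j; exact H (j : ℕ) j le_rfl
  intro n
  induction n with
  | zero =>
      intro j hj
      have : j = 0 := by
        apply Fin.val_injective; simpa using hj
      subst this
      have : rep m 0 = 0 := by unfold rep; rw [hmap_zero]; rfl
      rw [this]
      exact Relation.EqvGen.refl 0
  | succ n ih =>
      intro j hj
      rcases Nat.eq_zero_or_pos (j : ℕ) with hj0 | hjpos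
      · have : j = 0 := Fin.val_injective hj0
        subst this
        have : rep m 0 = 0 := by unfold rep; rw [hmap_zero]; rfl
        rw [this]
        exact Relation.EqvGen.refl 0
      · -- j ≥ 1; let e be the edge just before gap j
        set e : Fin k := ⟨(j:ℕ) - 1, by omega⟩ with he
        have hej : e + 1 = j := by
          apply Fin.val_injective
          rw [Fin.add_def]
          have h1k : 1 < k := one_lt_k hfix
          have : ((1 : Fin k) : ℕ) = 1 := by simp [Nat.mod_eq_of_lt h1k]
          rw [this]
          show ((j:ℕ) - 1 + 1) % k = (j:ℕ)
          rw [Nat.sub_add_cancel hjpos, Nat.mod_eq_of_lt j.isLt]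
        rcases Nat.lt_or_ge (e:ℕ) (m e:ℕ) with hlt | hge
        · -- the max covering chord of gap j is e; rep m j = e + 1 = j
          have h1 : hmap m j = (e : WithBot (Fin k)) := by
            rw [← hej]; exact hmap_succ e hlt
          have : rep m j = j := by
            unfold rep; rw [h1]; simpa using hej
          rw [this]
          exact Relation.EqvGen.refl j
        · -- glue step j = e+1 ~ m e, then recurse
          have hgl : glueRel m j (m e) := ⟨e, hej.symm, rfl⟩
          have hne : (m e : ℕ) ≠ (e : ℕ) := fun h => hfix e (Fin.val_injective h)
          have hmlt : (m e : ℕ) < (e : ℕ) := lt_of_le_of_ne hge hne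
          have heval : (e : ℕ) = (j:ℕ) - 1 := rfl
          have hrec := ih (m e) (by omega)
          have hrep : rep m (m e) = rep m j := by
            unfold rep
            rw [← hmap_glue hinv hfix hpl e, hej]
          rw [hrep] at hrec
          exact Relation.EqvGen.trans _ _ _ (Relation.EqvGen.rel _ _ hgl) hrec

include hinv hfix hpl in
lemma class_eq {u v : Fin k} (h : hmap m u = hmap m v) :
    Relation.EqvGen (glueRel m) u v := by
  have h1 := reach hinv hfix hpl u
  have h2 := reach hinv hfix hpl v
  have : rep m u = rep m v := by unfold rep; rw [h]
  rw [this] at h1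
  exact Relation.EqvGen.trans _ _ _ h1 (Relation.EqvGen.symm _ _ h2)

include hinv hfix in
omit [NeZero k] in
lemma card_S : (Finset.univ.filter fun i : Fin k => (i:ℕ) < (m i:ℕ)).card = k / 2 := by
  set S := Finset.univ.filter fun i : Fin k => (i:ℕ) < (m i:ℕ) with hS
  set T := Finset.univ.filter fun i : Fin k => ¬ (i:ℕ) < (m i:ℕ) with hT
  have hST : S.card = T.card := by
    apply Finset.card_bij' (fun a _ => m a) (fun a _ => m a)
    · intro a ha
      rw [hS, Finset.mem_filter] at ha
      rw [hT, Finset.mem_filter]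
      refine ⟨Finset.mem_univ _, ?_⟩
      rw [hinv]
      omega
    · intro a ha
      rw [hT, Finset.mem_filter] at ha
      rw [hS, Finset.mem_filter]
      refine ⟨Finset.mem_univ _, ?_⟩
      rw [hinv]
      have hne : (m a : ℕ) ≠ (a : ℕ) := fun h => hfix a (Fin.val_injective h)
      omega
    · intro a _; rw [hinv]
    · intro a _; rw [hinv]
  have hsum : S.card + T.card = k := by
    rw [hS, hT]
    rw [Finset.card_filter_add_card_filter_not]
    simp
  omega

include hinv hfix hpl in
lemma card_classes : Nat.card (Quotient (vertexSetoid m)) = k / 2 + 1 := by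
  set f : Quotient (vertexSetoid m) → WithBot (Fin k) :=
    Quotient.lift (hmap m) (fun a b h => hmap_eqvGen hinv hfix hpl h) with hf
  have finj : Function.Injective f := by
    intro x y
    refine Quotient.inductionOn₂ x y ?_
    intro a b h
    exact Quotient.sound (class_eq hinv hfix hpl h)
  have h1 : Nat.card (Quotient (vertexSetoid m)) = Nat.card (Set.range f) :=
    (Nat.card_range_of_injective finj).symm
  have h2 : Set.range f = Set.range (hmap m) := by
    ext y
    constructor
    · rintro ⟨q, rfl⟩
      obtain ⟨a, rfl⟩ := Quotient.exists_rep q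
      exact ⟨a, rfl⟩
    · rintro ⟨a, rfl⟩
      exact ⟨Quotient.mk _ a, rfl⟩
  set S := Finset.univ.filter fun i : Fin k => (i:ℕ) < (m i:ℕ) with hS
  have h3 : Set.range (hmap m) =
      ↑(insert (⊥ : WithBot (Fin k)) (S.image (fun i : Fin k => (i : WithBot (Fin k))))) := by
    ext y
    simp only [Finset.coe_insert, Set.mem_insert_iff, Finset.coe_image, Set.mem_image,
      Finset.mem_coe]
    constructor
    · rintro ⟨j, rfl⟩
      cases hm : (cov m (j:ℕ)).max with
      | bot => left; exact hm
      | coe b =>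
          right
          refine ⟨b, ?_, hm.symm⟩
          have hb := Finset.mem_of_max hm
          rw [mem_cov] at hb
          rw [hS, Finset.mem_filter]
          exact ⟨Finset.mem_univ _, hb.1⟩
    · rintro (rfl | ⟨i, hi, rfl⟩)
      · exact ⟨0, hmap_zero⟩
      · rw [hS, Finset.mem_filter] at hi
        exact ⟨i + 1, hmap_succ i hi.2⟩
  rw [h1, h2, h3]
  rw [Nat.card_coe_set_eq, Set.ncard_coe_finset]
  rw [Finset.card_insert_of_notMem (by simp)]
  rw [Finset.card_image_of_injective _ WithBot.coe_injective]
  rw [card_S hinv hfix]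

end main

open Fin.NatCast in
lemma connectivity {k : ℕ} [NeZero k] (m : Fin k → Fin k) :
    ∀ x y : Quotient (vertexSetoid m),
      Relation.ReflTransGen
        (fun u v : Quotient (vertexSetoid m) =>
          ∃ i : Fin k,
            (u = Quotient.mk (vertexSetoid m) i ∧
              v = Quotient.mk (vertexSetoid m) (i + 1)) ∨
            (u = Quotient.mk (vertexSetoid m) (i + 1) ∧
              v = Quotient.mk (vertexSetoid m) i)) x y := by
  set R := (fun u v : Quotient (vertexSetoid m) =>
          ∃ i : Fin k,
            (u = Quotient.mk (vertexSetoid m) i ∧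
              v = Quotient.mk (vertexSetoid m) (i + 1)) ∨
            (u = Quotient.mk (vertexSetoid m) (i + 1) ∧
              v = Quotient.mk (vertexSetoid m) i)) with hR
  have hsymm : Symmetric R := by
    rintro u v ⟨i, h | h⟩
    · exact ⟨i, Or.inr ⟨h.2, h.1⟩⟩
    · exact ⟨i, Or.inl ⟨h.2, h.1⟩⟩
  have hsymm' : Symmetric (Relation.ReflTransGen R) :=
    haveI : Std.Symm R := ⟨fun a b h => hsymm h⟩
    fun a b h => Std.Symm.symm a b h
  have key : ∀ n : ℕ, Relation.ReflTransGen R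
      (Quotient.mk (vertexSetoid m) 0) (Quotient.mk (vertexSetoid m) (n : Fin k)) := by
    intro n
    induction n with
    | zero => simp [Relation.ReflTransGen.refl]
    | succ n ih =>
        refine Relation.ReflTransGen.tail ih ⟨(n : Fin k), Or.inl ⟨rfl, ?_⟩⟩
        push_cast
        rfl
  have key' : ∀ j : Fin k, Relation.ReflTransGen R
      (Quotient.mk (vertexSetoid m) 0) (Quotient.mk (vertexSetoid m) j) := by
    intro j
    have := key (j : ℕ)
    rwa [Fin.cast_val_eq_self] at this
  intro x y
  obtain ⟨a, rfl⟩ := Quotient.exists_rep x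
  obtain ⟨b, rfl⟩ := Quotient.exists_rep y
  exact Relation.ReflTransGen.trans (hsymm' (key' a)) (key' b)

/-- the multigraph obtained from a cycle with `k` edges by a
complete planar matching of its edges (identifying matched pairs preserving
orientation) is a tree: it is connected and has `k/2 + 1` vertices, i.e.
(number of vertices) = (number of edges) + 1. -/
theorem stmt3 (k : ℕ) [NeZero k] (hk : Even k)
    (m : Fin k → Fin k) (hinv : Function.Involutive m) (hfix : ∀ i, m i ≠ i)
    (hpl : NonCrossing m) :
    Nat.card (Quotient (vertexSetoid m)) = k / 2 + 1 ∧
    ∀ x y : Quotient (vertexSetoid m),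
      Relation.ReflTransGen
        (fun u v : Quotient (vertexSetoid m) =>
          ∃ i : Fin k,
            (u = Quotient.mk (vertexSetoid m) i ∧
              v = Quotient.mk (vertexSetoid m) (i + 1)) ∨
            (u = Quotient.mk (vertexSetoid m) (i + 1) ∧
              v = Quotient.mk (vertexSetoid m) i)) x y :=
  ⟨card_classes hinv hfix hpl, connectivity m⟩

end MogamiPaper
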